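/- Let F be a distortion-free watermarking operator, λ ∈ [0,1], and F_λ(P,k) = λ·F(P,k) + (1-λ)·P. Then the expected entropy of the weakened watermark is at least that of the original: E_k[H(F_λ(P,k))] ≥ E_k[H(F(P,k))]. -/
import Mathlib

open Finset

def IsDist {V : Type*} [Fintype V] (P : V → ℝ) : Prop :=
  (∀ x, 0 ≤ P x) ∧ ∑ x, P x = 1

noncomputable def entropy {V : Type*} [Fintype V] (P : V → ℝ) : ℝ :=
  ∑ x, Real.negMulLog (P x)

/-- Pointwise two-point concavity applied coordinatewise. -/
lemma entropy_mix_ge {V : Type*} [Fintype V] (Q P : V → ℝ) (hQ : IsDist Q) (hP : IsDist P)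
    (lam : ℝ) (h0 : 0 ≤ lam) (h1 : lam ≤ 1) :
    lam * entropy Q + (1 - lam) * entropy P
      ≤ entropy (fun x => lam * Q x + (1 - lam) * P x) := by
  unfold entropy
  rw [Finset.mul_sum, Finset.mul_sum, ← Finset.sum_add_distrib]
  apply Finset.sum_le_sum
  intro x _
  have := Real.concaveOn_negMulLog.2 (Set.mem_Ici.2 (hQ.1 x)) (Set.mem_Ici.2 (hP.1 x))
    h0 (sub_nonneg.2 h1) (by ring : lam + (1 - lam) = 1)
  simp only [smul_eq_mul] at this
  simpa using this

/-- Jensen: entropy of the mixture over keys is at least expected entropy. -/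
lemma entropy_avg_ge {V K : Type*} [Fintype V] [Fintype K]
    (w : K → ℝ) (hw : ∀ k, 0 ≤ w k) (hw1 : ∑ k, w k = 1)
    (Q : K → V → ℝ) (hQ : ∀ k, IsDist (Q k)) (P : V → ℝ)
    (hE : ∀ x, ∑ k, w k * Q k x = P x) :
    ∑ k, w k * entropy (Q k) ≤ entropy P := by
  unfold entropy
  simp_rw [Finset.mul_sum]
  rw [Finset.sum_comm]
  · apply Finset.sum_le_sum
    intro x _
    have := Real.concaveOn_negMulLog.le_map_sum (t := Finset.univ)
      (w := w) (p := fun k => Q k x) (fun k _ => hw k) hw1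
      (fun k _ => Set.mem_Ici.2 ((hQ k).1 x))
    simp only [smul_eq_mul] at this
    rw [hE x] at this
    exact this

/-- Entropy preservation of the weakened watermark `F_λ(P,k) = λ·F(P,k) + (1-λ)·P`:
`E_k[H(F_λ(P,k))] ≥ E_k[H(F(P,k))]`. -/
theorem weaker_watermark_entropy_preserve {V K : Type*} [Fintype V] [Fintype K]
    (w : K → ℝ) (hw : ∀ k, 0 ≤ w k) (hw1 : ∑ k, w k = 1)
    (F : (V → ℝ) → K → (V → ℝ))
    (hFd : ∀ Q, IsDist Q → ∀ k, IsDist (F Q k))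
    (hDF : ∀ Q, IsDist Q → ∀ x, ∑ k, w k * F Q k x = Q x)
    (lam : ℝ) (hlam : lam ∈ Set.Icc (0:ℝ) 1)
    (P : V → ℝ) (hP : IsDist P) :
    ∑ k, w k * entropy (fun x => lam * F P k x + (1 - lam) * P x)
      ≥ ∑ k, w k * entropy (F P k) := by
  obtain ⟨h0, h1⟩ := hlam
  have hHP : ∑ k, w k * entropy (F P k) ≤ entropy P :=
    entropy_avg_ge w hw hw1 (F P) (hFd P hP) P (hDF P hP)
  have step1 : ∑ k, w k * (lam * entropy (F P k) + (1 - lam) * entropy P)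
      ≤ ∑ k, w k * entropy (fun x => lam * F P k x + (1 - lam) * P x) := by
    apply Finset.sum_le_sum
    intro k _
    exact mul_le_mul_of_nonneg_left
      (entropy_mix_ge (F P k) P (hFd P hP k) hP lam h0 h1) (hw k)
  have expand : ∑ k, w k * (lam * entropy (F P k) + (1 - lam) * entropy P)
      = lam * ∑ k, w k * entropy (F P k) + (1 - lam) * entropy P := by
    simp only [mul_add]
    rw [Finset.sum_add_distrib]
    congr 1
    · rw [Finset.mul_sum]; exact Finset.sum_congr rfl (fun k _ => by ring)
    · rw [← Finset.sum_mul, hw1, one_mul]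
  have : lam * ∑ k, w k * entropy (F P k) + (1 - lam) * entropy P
      ≥ ∑ k, w k * entropy (F P k) := by nlinarith
  calc ∑ k, w k * entropy (F P k)
      ≤ lam * ∑ k, w k * entropy (F P k) + (1 - lam) * entropy P := this
    _ = ∑ k, w k * (lam * entropy (F P k) + (1 - lam) * entropy P) := expand.symm
    _ ≤ _ := step1
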